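/- Let d₁,…,dₙ be nonnegative reals with average α = (Σdᵢ)/n > 20. Then Σᵢ (dᵢ³ − 21dᵢ² + 20dᵢ) > 0. -/

import Mathlib

/-- If `d₁,…,dₙ` are nonnegative reals with average `α = (∑ dᵢ)/n > 20`, then
`∑ (dᵢ³ − 21 dᵢ² + 20 dᵢ) > 0`. -/
theorem stmt_16 (n : ℕ) (d : Fin n → ℝ) (hd : ∀ i, 0 ≤ d i)
    (havg : (∑ i, d i) / n > 20) :
    0 < ∑ i, ((d i) ^ 3 - 21 * (d i) ^ 2 + 20 * d i) := by
  have hn : 0 < n := by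
    rcases Nat.eq_zero_or_pos n with h | h
    · subst h; simp at havg; linarith
    · exact h
  have hn' : (0:ℝ) < n := by exact_mod_cast hn
  set α : ℝ := (∑ i, d i) / n with hα
  have hS : ∑ i, d i = n * α := by rw [hα]; field_simp [hn'.ne']
  have hpt : ∀ i, (α^3 - 21*α^2 + 20*α) + (3*α^2 - 42*α + 20) * (d i - α)
      ≤ (d i)^3 - 21*(d i)^2 + 20*(d i) := by
    intro i
    have h1 : 0 ≤ (d i - α)^2 * (d i + 2*α - 21) :=
      mul_nonneg (sq_nonneg _) (by have := hd i; linarith)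
    nlinarith [h1]
  have hsum : ∑ i, ((α^3 - 21*α^2 + 20*α) + (3*α^2 - 42*α + 20) * (d i - α))
      ≤ ∑ i, ((d i)^3 - 21*(d i)^2 + 20*(d i)) :=
    Finset.sum_le_sum fun i _ => hpt i
  have hval : ∑ i, ((α^3 - 21*α^2 + 20*α) + (3*α^2 - 42*α + 20) * (d i - α))
      = n * (α^3 - 21*α^2 + 20*α) := by
    rw [Finset.sum_add_distrib, Finset.sum_const, ← Finset.mul_sum,
      Finset.sum_sub_distrib, Finset.sum_const, hS]
    simp [Finset.card_univ]
    ring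
  have hpos : 0 < n * (α^3 - 21*α^2 + 20*α) := by
    have h20 : (20:ℝ) < α := havg
    have : 0 < α^3 - 21*α^2 + 20*α := by nlinarith [mul_pos (mul_pos (show (0:ℝ) < α by linarith) (show (0:ℝ) < α - 1 by linarith)) (show (0:ℝ) < α - 20 by linarith)]
    exact mul_pos hn' this
  linarith [hsum, hval.symm ▸ hsum, hval ▸ hsum]
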